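/- Let R be a commutative ring and I an ideal such that R is I-adically Hausdorff complete (IsAdicComplete I R). Let n be a finite index type and T : Matrix n n R a square matrix. Then T is invertible (IsUnit T in the matrix ring) if and only if its entrywise reduction modulo I, i.e. the matrix T̄ over R/I obtained by applying the quotient map R → R/I to each entry, is invertible over R/I. -/
import Mathlib

theorem isUnit_of_isUnit_quotient {R : Type*} [CommRing R] (I : Ideal R)
    (h : I ≤ Ideal.jacobson ⊥) {x : R} (hx : IsUnit (Ideal.Quotient.mk I x)) :
    IsUnit x := by
  obtain ⟨u, hu⟩ := hx
  obtain ⟨y, hy⟩ := Ideal.Quotient.mk_surjective ((u⁻¹ : (R ⧸ I)ˣ) : R ⧸ I)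
  have : Ideal.Quotient.mk I (x * y - 1) = 0 := by
    rw [map_sub, map_mul, hy, ← hu, map_one, u.mul_inv, sub_self]
  have hmem : x * y - 1 ∈ I := Ideal.Quotient.eq_zero_iff_mem.mp this
  have := Ideal.isUnit_of_sub_one_mem_jacobson_bot (x * y) (h hmem)
  exact isUnit_of_mul_isUnit_left this

/-- Over an `I`-adically Hausdorff complete commutative ring, a
square matrix is invertible iff its entrywise reduction modulo `I` is invertible
over `R/I`. -/
theorem matrix_isUnit_iff_isUnit_map_quotient
    {R : Type*} [CommRing R] (I : Ideal R) [IsAdicComplete I R]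
    {n : Type*} [Fintype n] [DecidableEq n] (T : Matrix n n R) :
    IsUnit T ↔ IsUnit (T.map (Ideal.Quotient.mk I)) := by
  constructor
  · intro h
    exact h.map (Ideal.Quotient.mk I).mapMatrix
  · intro h
    rw [Matrix.isUnit_iff_isUnit_det] at h ⊢
    rw [show T.map (Ideal.Quotient.mk I) = (Ideal.Quotient.mk I).mapMatrix T from rfl, ← RingHom.map_det] at h
    exact isUnit_of_isUnit_quotient I (IsAdicComplete.le_jacobson_bot I) h
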